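/- Let g ∈ ∂J(x) where J is the SLOPE norm with weights w_1 > 0, w_1 ≥ ... ≥ w_n ≥ 0, and suppose x_ℓ ≠ 0 for some index ℓ. Then sign(g_ℓ) · sign(x_ℓ) ≥ 0, with equality if and only if g_ℓ = 0. -/

import Mathlib

open Finset Matrix

/-- `kth v k` is the `(k+1)`-th largest entry of `v` (zero-indexed: `kth v 0` is the largest). -/
noncomputable def kth {n : ℕ} (v : Fin n → ℝ) (k : ℕ) : ℝ :=
  if h : k < n then v (Tuple.sort (fun i => -v i) ⟨k, h⟩) else 0

/-- `absKth v k` is the `(k+1)`-th largest absolute entry of `v` (zero-indexed). -/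
noncomputable def absKth {n : ℕ} (v : Fin n → ℝ) (k : ℕ) : ℝ :=
  kth (fun i => |v i|) k

/-- The SLOPE (sorted-ℓ1) function with weights `w 0 ≥ w 1 ≥ …` (zero-indexed). -/
noncomputable def slopeNorm {n : ℕ} (w : ℕ → ℝ) (x : Fin n → ℝ) : ℝ :=
  ∑ k ∈ Finset.range n, w k * absKth x k

/-- Dual norm of a norm `J` on `ℝ^n`. -/
noncomputable def dualNorm {n : ℕ} (J : (Fin n → ℝ) → ℝ) (g : Fin n → ℝ) : ℝ :=
  sSup {t : ℝ | ∃ x : Fin n → ℝ, J x ≤ 1 ∧ t = ∑ i, g i * x i}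

/-- `dropIdx ℓ v` is the vector `v` deprived of its `ℓ`-th entry. -/
def dropIdx {n : ℕ} (ℓ : Fin n) (v : Fin n → ℝ) : Fin (n - 1) → ℝ :=
  fun j => if h : (j : ℕ) < (ℓ : ℕ) then v ⟨j, lt_trans h ℓ.isLt⟩
           else v ⟨(j : ℕ) + 1, by have := j.isLt; omega⟩


lemma kth_zero_ge {n : ℕ} (hn : 0 < n) (v : Fin n → ℝ) (i : Fin n) :
    v i ≤ kth v 0 := by
  unfold kth
  rw [dif_pos hn]
  set σ := Tuple.sort (fun i => -v i) with hσ
  have hmono : Monotone ((fun i => -v i) ∘ σ) := Tuple.monotone_sort _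
  obtain ⟨j, hj⟩ : ∃ j, σ j = i := ⟨σ.symm i, σ.apply_symm_apply i⟩
  have h0 : (⟨0, hn⟩ : Fin n) ≤ j := by
    simp [Fin.le_def]
  have := hmono h0
  simp only [Function.comp_apply, hj] at this
  linarith

lemma kth_smul {n : ℕ} (v : Fin n → ℝ) (c : ℝ) (hc : 0 < c) (k : ℕ) :
    kth (fun i => c * v i) k = c * kth v k := by
  unfold kth
  split_ifs with h
  · have hs : (Tuple.sort fun i => -(c * v i)) = Tuple.sort fun i => -v i := by
      symm
      rw [Tuple.eq_sort_iff]
      constructor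
      · intro a b hab
        have := Tuple.monotone_sort (fun i => -v i) hab
        simp only [Function.comp_apply] at this ⊢
        nlinarith
      · intro a b hab heq
        have heq' : v ((Tuple.sort fun i => -v i) a) = v ((Tuple.sort fun i => -v i) b) := by
          nlinarith [heq]
        have := (Tuple.eq_sort_iff (f := fun i => -v i)
          (σ := Tuple.sort fun i => -v i)).mp rfl
        exact this.2 a b hab (by simp [heq'])
    show c * v ((Tuple.sort fun i => -(c * v i)) ⟨k, h⟩) = _
    rw [hs]
  · ring

lemma absKth_nonneg {n : ℕ} (v : Fin n → ℝ) (k : ℕ) : 0 ≤ absKth v k := by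
  unfold absKth kth
  split_ifs with h
  · positivity
  · exact le_refl 0

lemma absKth_le_zeroth {n : ℕ} (hn : 0 < n) (v : Fin n → ℝ) (i : Fin n) :
    |v i| ≤ absKth v 0 := kth_zero_ge hn (fun i => |v i|) i

lemma slope_term_nonneg {n : ℕ} (w : ℕ → ℝ)
    (hwa : ∀ i j : ℕ, i ≤ j → j < n → w j ≤ w i) (hwn : 0 ≤ w (n - 1))
    (v : Fin n → ℝ) (k : ℕ) (hk : k < n) : 0 ≤ w k * absKth v k := by
  have hw : 0 ≤ w k := le_trans hwn (hwa k (n-1) (by omega) (by omega))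
  exact mul_nonneg hw (absKth_nonneg v k)

lemma slope_ge {n : ℕ} (hn : 0 < n) (w : ℕ → ℝ)
    (hwa : ∀ i j : ℕ, i ≤ j → j < n → w j ≤ w i) (hwn : 0 ≤ w (n - 1))
    (v : Fin n → ℝ) (i : Fin n) : w 0 * |v i| ≤ slopeNorm w v := by
  have h1 : w 0 * |v i| ≤ w 0 * absKth v 0 := by
    have hw : 0 ≤ w 0 := le_trans hwn (hwa 0 (n-1) (by omega) (by omega))
    exact mul_le_mul_of_nonneg_left (absKth_le_zeroth hn v i) hw
  refine h1.trans ?_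
  exact Finset.single_le_sum (fun k hk => slope_term_nonneg w hwa hwn v k (Finset.mem_range.mp hk))
    (Finset.mem_range.mpr hn)


theorem sign_subdiff {n : ℕ} (hn : 0 < n) (w : ℕ → ℝ)
    (hw0 : 0 < w 0) (hwa : ∀ i j : ℕ, i ≤ j → j < n → w j ≤ w i)
    (hwn : 0 ≤ w (n - 1))
    (x g : Fin n → ℝ)
    (hg : ∑ i, g i * x i = slopeNorm w x ∧ dualNorm (slopeNorm w) g ≤ 1)
    (ℓ : Fin n) (hx : x ℓ ≠ 0) :
    0 ≤ Real.sign (g ℓ) * Real.sign (x ℓ) ∧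
      (Real.sign (g ℓ) * Real.sign (x ℓ) = 0 ↔ g ℓ = 0) := by
  obtain ⟨heq, hdual⟩ := hg
  -- J x > 0
  have hJx : 0 < slopeNorm w x :=
    lt_of_lt_of_le (by positivity) (slope_ge hn w hwa hwn x ℓ)
  -- the flipped vector
  set y : Fin n → ℝ := fun i => if i = ℓ then -x ℓ else x i with hy
  have habs : ∀ i, |y i| = |x i| := by
    intro i
    by_cases h : i = ℓ <;> simp [hy, h]
  have hJy : slopeNorm w y = slopeNorm w x := by
    unfold slopeNorm absKth
    congr 1
    ext k
    congr 2
    ext i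
    rw [habs]
  -- the scaled vector has slope norm = 1
  set c : ℝ := (slopeNorm w x)⁻¹ with hc
  have hcpos : 0 < c := inv_pos.mpr hJx
  set z : Fin n → ℝ := fun i => c * y i with hz
  have hJz : slopeNorm w z = 1 := by
    have : ∀ k, absKth z k = c * absKth y k := by
      intro k
      unfold absKth
      have : (fun i => |z i|) = fun i => c * |y i| := by
        ext i
        rw [hz, abs_mul, abs_of_pos hcpos]
      rw [this, kth_smul _ c hcpos]
    unfold slopeNorm
    simp only [this]
    have : ∑ k ∈ Finset.range n, w k * (c * absKth y k)
        = c * ∑ k ∈ Finset.range n, w k * absKth y k := by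
      rw [Finset.mul_sum]; congr 1; ext k; ring
    rw [this]
    show c * slopeNorm w y = 1
    rw [hJy, hc]
    field_simp
  -- the set defining dualNorm is bounded above
  set S := {t : ℝ | ∃ v : Fin n → ℝ, slopeNorm w v ≤ 1 ∧ t = ∑ i, g i * v i} with hS
  have hbdd : BddAbove S := by
    refine ⟨(∑ i, |g i|) / w 0, ?_⟩
    rintro t ⟨v, hv1, rfl⟩
    have hvb : ∀ i, |v i| ≤ 1 / w 0 := by
      intro i
      have := (slope_ge hn w hwa hwn v i).trans hv1
      rw [le_div_iff₀ hw0]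
      linarith [this]
    calc ∑ i, g i * v i ≤ ∑ i, |g i| * (1 / w 0) := by
          apply Finset.sum_le_sum
          intro i _
          calc g i * v i ≤ |g i * v i| := le_abs_self _
            _ = |g i| * |v i| := abs_mul _ _
            _ ≤ |g i| * (1 / w 0) := by
                exact mul_le_mul_of_nonneg_left (hvb i) (abs_nonneg _)
      _ = (∑ i, |g i|) / w 0 := by rw [← Finset.sum_mul]; ring
  -- ⟨g, z⟩ ∈ S so ⟨g, z⟩ ≤ 1
  have hmem : (∑ i, g i * z i) ∈ S := ⟨z, le_of_eq hJz, rfl⟩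
  have hle1 : (∑ i, g i * z i) ≤ 1 := le_trans (le_csSup hbdd hmem) hdual
  -- compute ∑ g i * z i = c * (J x - 2 g ℓ * x ℓ)
  have hsum : ∑ i, g i * y i = (∑ i, g i * x i) - 2 * (g ℓ * x ℓ) := by
    have : ∑ i, (g i * y i - g i * x i) = -(2 * (g ℓ * x ℓ)) := by
      rw [Finset.sum_eq_single ℓ]
      · simp [hy]; ring
      · intro b _ hb; simp [hy, hb]
      · intro h; exact absurd (Finset.mem_univ ℓ) h
    have h2 : ∑ i, (g i * y i - g i * x i)
        = (∑ i, g i * y i) - ∑ i, g i * x i := Finset.sum_sub_distrib _ _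
    linarith [this, h2.symm, h2]
  have hzy : ∑ i, g i * z i = c * ∑ i, g i * y i := by
    rw [Finset.mul_sum]; congr 1; ext i; rw [hz]; ring
  have hkey : 0 ≤ g ℓ * x ℓ := by
    have h3 : c * ((slopeNorm w x) - 2 * (g ℓ * x ℓ)) ≤ 1 := by
      rw [← heq, ← hsum, ← hzy]; exact hle1
    have h4 : c * slopeNorm w x = 1 := by rw [hc]; field_simp
    nlinarith [h3, h4, hcpos]
  -- conclude about signs
  constructor
  · rcases lt_trichotomy (g ℓ) 0 with h | h | h
    · rcases lt_trichotomy (x ℓ) 0 with h' | h' | h'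
      · rw [Real.sign_of_neg h, Real.sign_of_neg h']; norm_num
      · exact absurd h' hx
      · nlinarith
    · rw [h, Real.sign_zero]; simp
    · rcases lt_trichotomy (x ℓ) 0 with h' | h' | h'
      · nlinarith
      · exact absurd h' hx
      · rw [Real.sign_of_pos h, Real.sign_of_pos h']; norm_num
  · constructor
    · intro h0
      have hxs : Real.sign (x ℓ) ≠ 0 := by
        rcases lt_trichotomy (x ℓ) 0 with h' | h' | h'
        · rw [Real.sign_of_neg h']; norm_num
        · exact absurd h' hx
        · rw [Real.sign_of_pos h']; norm_num
      have : Real.sign (g ℓ) = 0 := by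
        rcases mul_eq_zero.mp h0 with h | h
        · exact h
        · exact absurd h hxs
      exact Real.sign_eq_zero_iff.mp this
    · intro h0
      rw [h0, Real.sign_zero, zero_mul]
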